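/- Under the setting above, for all x, y ∈ ℝⁿ: ((−m⁴μ + μ − λm²)/(λμm))‖x − y‖² ≤ ⟨∇Φ_{λ,μ}(x) − ∇Φ_{λ,μ}(y), x − y⟩ ≤ ((λm⁴ + μm² − λ)/(λμm))‖x − y‖². -/

import Mathlib

open Matrix

/-- The quadratic form `uᵀ D u` on Euclidean space, i.e. `‖u‖²_D`. -/
def quadD {n : ℕ} (D : Matrix (Fin n) (Fin n) ℝ) (u : EuclideanSpace ℝ (Fin n)) : ℝ :=
  (WithLp.equiv 2 (Fin n → ℝ) u) ⬝ᵥ D.mulVec (WithLp.equiv 2 (Fin n → ℝ) u)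

/-- `D * u` as a vector of Euclidean space. -/
noncomputable def mulVecE {n : ℕ} (D : Matrix (Fin n) (Fin n) ℝ)
    (u : EuclideanSpace ℝ (Fin n)) : EuclideanSpace ℝ (Fin n) :=
  (WithLp.equiv 2 (Fin n → ℝ)).symm (D.mulVec (WithLp.equiv 2 (Fin n → ℝ) u))

namespace Aux

variable {n : ℕ}

noncomputable def Bf (D : Matrix (Fin n) (Fin n) ℝ)
    (u v : EuclideanSpace ℝ (Fin n)) : ℝ :=
  inner ℝ (mulVecE D u) v

lemma mulVecE_eq (D : Matrix (Fin n) (Fin n) ℝ) (u : EuclideanSpace ℝ (Fin n)) :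
    mulVecE D u = Matrix.toEuclideanLin D u := rfl

lemma mulVecE_sub (D : Matrix (Fin n) (Fin n) ℝ) (u v : EuclideanSpace ℝ (Fin n)) :
    mulVecE D (u - v) = mulVecE D u - mulVecE D v := by
  simp [mulVecE_eq, map_sub]

lemma mulVecE_add (D : Matrix (Fin n) (Fin n) ℝ) (u v : EuclideanSpace ℝ (Fin n)) :
    mulVecE D (u + v) = mulVecE D u + mulVecE D v := by
  simp [mulVecE_eq, map_add]

lemma mulVecE_smul (D : Matrix (Fin n) (Fin n) ℝ) (t : ℝ) (u : EuclideanSpace ℝ (Fin n)) :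
    mulVecE D (t • u) = t • mulVecE D u := by
  simp [mulVecE_eq, _root_.map_smul]

lemma quadD_eq (D : Matrix (Fin n) (Fin n) ℝ) (u : EuclideanSpace ℝ (Fin n)) :
    quadD D u = Bf D u u := by
  simp [quadD, Bf, mulVecE, PiLp.inner_apply, dotProduct, RCLike.inner_apply,
    mul_comm]

lemma Bf_symm {D : Matrix (Fin n) (Fin n) ℝ} (hD : D.IsHermitian)
    (u v : EuclideanSpace ℝ (Fin n)) : Bf D u v = Bf D v u := by
  have hsym := (Matrix.isHermitian_iff_isSymmetric.mp hD)
  rw [Bf, Bf, mulVecE_eq, mulVecE_eq, hsym u v, real_inner_comm]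

lemma Bf_sub_left (D : Matrix (Fin n) (Fin n) ℝ) (u v w : EuclideanSpace ℝ (Fin n)) :
    Bf D (u - v) w = Bf D u w - Bf D v w := by
  rw [Bf, mulVecE_sub, inner_sub_left]; rfl

lemma Bf_add_left (D : Matrix (Fin n) (Fin n) ℝ) (u v w : EuclideanSpace ℝ (Fin n)) :
    Bf D (u + v) w = Bf D u w + Bf D v w := by
  rw [Bf, mulVecE_add, inner_add_left]; rfl

lemma Bf_smul_left (D : Matrix (Fin n) (Fin n) ℝ) (t : ℝ) (u w : EuclideanSpace ℝ (Fin n)) :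
    Bf D (t • u) w = t * Bf D u w := by
  rw [Bf, mulVecE_smul, real_inner_smul_left]; rfl

lemma Bf_smul_right (D : Matrix (Fin n) (Fin n) ℝ) (t : ℝ) (u w : EuclideanSpace ℝ (Fin n)) :
    Bf D u (t • w) = t * Bf D u w := by
  rw [Bf, real_inner_smul_right]; rfl

lemma Bf_sub_right {D : Matrix (Fin n) (Fin n) ℝ} (hD : D.IsHermitian)
    (u v w : EuclideanSpace ℝ (Fin n)) :
    Bf D w (u - v) = Bf D w u - Bf D w v := by
  rw [Bf_symm hD, Bf_sub_left, Bf_symm hD, Bf_symm hD v]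

end Aux

namespace Aux
variable {n : ℕ}

lemma quadD_spectral {D : Matrix (Fin n) (Fin n) ℝ} (hD : D.IsHermitian)
    (u : EuclideanSpace ℝ (Fin n)) :
    quadD D u = ∑ i, hD.eigenvalues i * (inner ℝ (hD.eigenvectorBasis i) u : ℝ)^2 := by
  set B := hD.eigenvectorBasis with hB
  have hTB : ∀ i, mulVecE D (B i) = hD.eigenvalues i • B i := by
    intro i
    apply (WithLp.equiv 2 (Fin n → ℝ)).injective
    simp only [mulVecE, Equiv.apply_symm_apply, WithLp.equiv_apply, WithLp.ofLp_smul]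
    exact hD.mulVec_eigenvectorBasis i
  have h1 : quadD D u = inner ℝ u (mulVecE D u) := by
    rw [quadD_eq, Bf, real_inner_comm]
  rw [h1, ← B.sum_inner_mul_inner u (mulVecE D u)]
  congr 1; funext i
  have hsym := Matrix.isHermitian_iff_isSymmetric.mp hD
  have h2 : (inner ℝ (B i) (mulVecE D u) : ℝ) = hD.eigenvalues i * inner ℝ (B i) u := by
    rw [mulVecE_eq, ← hsym (B i) u, ← mulVecE_eq, hTB i, real_inner_smul_left]
  rw [h2, real_inner_comm u (B i)]; ring

lemma norm_sq_spectral {D : Matrix (Fin n) (Fin n) ℝ} (hD : D.IsHermitian)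
    (u : EuclideanSpace ℝ (Fin n)) :
    ‖u‖^2 = ∑ i, (inner ℝ (hD.eigenvectorBasis i) u : ℝ)^2 := by
  set B := hD.eigenvectorBasis with hB
  rw [← real_inner_self_eq_norm_sq, ← B.sum_inner_mul_inner u u]
  congr 1; funext i
  rw [real_inner_comm u (B i), sq]

lemma quadD_le {m : ℝ} {D : Matrix (Fin n) (Fin n) ℝ} (hD : D.IsHermitian)
    (h : ∀ i, hD.eigenvalues i ∈ Set.Icc (1/m) m) (u : EuclideanSpace ℝ (Fin n)) :
    quadD D u ≤ m * ‖u‖^2 := by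
  rw [quadD_spectral hD, norm_sq_spectral hD u, Finset.mul_sum]
  exact Finset.sum_le_sum fun i _ =>
    mul_le_mul_of_nonneg_right (h i).2 (sq_nonneg _)

lemma le_quadD {m : ℝ} {D : Matrix (Fin n) (Fin n) ℝ} (hD : D.IsHermitian)
    (h : ∀ i, hD.eigenvalues i ∈ Set.Icc (1/m) m) (u : EuclideanSpace ℝ (Fin n)) :
    (1/m) * ‖u‖^2 ≤ quadD D u := by
  rw [quadD_spectral hD, norm_sq_spectral hD u, Finset.mul_sum]
  exact Finset.sum_le_sum fun i _ =>
    mul_le_mul_of_nonneg_right (h i).1 (sq_nonneg _)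

end Aux

namespace Aux
variable {n : ℕ}

lemma Bf_add_right {D : Matrix (Fin n) (Fin n) ℝ} (hD : D.IsHermitian)
    (u v w : EuclideanSpace ℝ (Fin n)) :
    Bf D w (u + v) = Bf D w u + Bf D w v := by
  rw [Bf_symm hD, Bf_add_left, Bf_symm hD, Bf_symm hD v]

lemma quadD_expand {D : Matrix (Fin n) (Fin n) ℝ} (hD : D.IsHermitian)
    (s t : ℝ) (u v : EuclideanSpace ℝ (Fin n)) :
    quadD D (s • u + t • v)
      = s^2 * quadD D u + 2*s*t * Bf D u v + t^2 * quadD D v := by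
  simp only [quadD_eq, Bf_add_left, Bf_add_right hD, Bf_smul_left, Bf_smul_right]
  rw [Bf_symm hD v u]; ring

lemma quadD_pos {D : Matrix (Fin n) (Fin n) ℝ} (hD : D.PosDef)
    {u : EuclideanSpace ℝ (Fin n)} (hu : u ≠ 0) : 0 < quadD D u := by
  have := hD.dotProduct_mulVec_pos (x := WithLp.equiv 2 (Fin n → ℝ) u) (fun h => hu ((WithLp.equiv 2 (Fin n → ℝ)).injective h))
  simpa [quadD] using this

lemma quadD_nonneg {D : Matrix (Fin n) (Fin n) ℝ} (hD : D.PosDef)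
    (u : EuclideanSpace ℝ (Fin n)) : 0 ≤ quadD D u := by
  rcases eq_or_ne u 0 with h | h
  · subst h
    have : quadD D (0 : EuclideanSpace ℝ (Fin n)) = 0 := by
      simp [quadD]
    rw [this]
  · exact (quadD_pos hD h).le

lemma Bf_sq_le {D : Matrix (Fin n) (Fin n) ℝ} (hD : D.PosDef)
    (u v : EuclideanSpace ℝ (Fin n)) :
    (Bf D u v)^2 ≤ quadD D u * quadD D v := by
  rcases eq_or_ne u 0 with h | h
  · subst h
    have h1 : Bf D 0 v = 0 := by simp [Bf, mulVecE_eq]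
    have h2 : quadD D (0 : EuclideanSpace ℝ (Fin n)) = 0 := by simp [quadD]
    rw [h1, h2]; simp
  · set a := quadD D u with ha'
    set b := Bf D u v with hb'
    set c := quadD D v with hc'
    have ha : 0 < a := quadD_pos hD h
    have key : 0 ≤ quadD D (a • v + (-b) • u) := quadD_nonneg hD _
    rw [quadD_expand hD.1] at key
    rw [Bf_symm hD.1 v u, ← hb', ← ha', ← hc'] at key
    nlinarith [key, ha]

end Aux

namespace Aux
variable {n : ℕ}

lemma Bf_zero_left (D : Matrix (Fin n) (Fin n) ℝ) (w : EuclideanSpace ℝ (Fin n)) :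
    Bf D 0 w = 0 := by simp [Bf, mulVecE_eq]

lemma Bf_neg_left (D : Matrix (Fin n) (Fin n) ℝ) (u w : EuclideanSpace ℝ (Fin n)) :
    Bf D (-u) w = - Bf D u w := by
  have h : (-u) = (0 : EuclideanSpace ℝ (Fin n)) - u := by abel
  rw [h, Bf_sub_left, Bf_zero_left]; ring

lemma Bf_neg_right {D : Matrix (Fin n) (Fin n) ℝ} (hD : D.IsHermitian)
    (u w : EuclideanSpace ℝ (Fin n)) :
    Bf D u (-w) = - Bf D u w := by
  rw [Bf_symm hD, Bf_neg_left, Bf_symm hD]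

/-- Variational inequality for the prox map. -/
lemma prox_VI {D : Matrix (Fin n) (Fin n) ℝ} (hD : D.PosDef)
    {lam : ℝ} (hlam : 0 < lam)
    {g : EuclideanSpace ℝ (Fin n) → ℝ} (hg : ConvexOn ℝ Set.univ g)
    {p : EuclideanSpace ℝ (Fin n) → EuclideanSpace ℝ (Fin n)}
    (hp : ∀ x w, g (p x) + quadD D (p x - x) / (2*lam)
            ≤ g w + quadD D (w - x) / (2*lam))
    (x z : EuclideanSpace ℝ (Fin n)) :
    Bf D (x - p x) (z - p x) / lam ≤ g z - g (p x) := by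
  set Q := quadD D (z - p x) with hQ
  set K := Q / (2*lam) with hK
  have h2l : (0:ℝ) < 2*lam := by linarith
  have hQnn : 0 ≤ Q := quadD_nonneg hD _
  have hKnn : 0 ≤ K := div_nonneg hQnn h2l.le
  set B := Bf D (x - p x) (z - p x) with hB
  have key : ∀ t : ℝ, 0 < t → t ≤ 1 →
      0 ≤ (g z - g (p x) - B / lam) + t * K := by
    intro t ht ht1
    have hw : p x + t • (z - p x) = (1 - t) • p x + t • z := by
      rw [sub_smul, one_smul, smul_sub]; abel
    have hconv : g (p x + t • (z - p x)) ≤ (1 - t) * g (p x) + t * g z := by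
      rw [hw]
      exact hg.2 (Set.mem_univ _) (Set.mem_univ _) (by linarith) ht.le (by ring)
    have hmin := hp x (p x + t • (z - p x))
    have hBneg : Bf D (p x - x) (z - p x) = - B := by
      have h : (p x - x) = -(x - p x) := by abel
      rw [h, Bf_neg_left, hB]
    have hquad : quadD D (p x + t • (z - p x) - x)
        = quadD D (p x - x) + 2*t * (-B) + t^2 * Q := by
      have h1 : p x + t • (z - p x) - x = (1:ℝ) • (p x - x) + t • (z - p x) := by
        rw [one_smul]; abel
      rw [h1, quadD_expand hD.1, hBneg, hQ]; ring
    rw [hquad] at hmin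
    have hmin2 := mul_le_mul_of_nonneg_right hmin h2l.le
    rw [add_mul, add_mul, div_mul_cancel₀ _ h2l.ne', div_mul_cancel₀ _ h2l.ne'] at hmin2
    have hconv2 := mul_le_mul_of_nonneg_right hconv h2l.le
    have base : 0 ≤ t*((g z - g (p x))*(2*lam) - 2*B + t*Q) := by nlinarith [hmin2, hconv2]
    have goal2 : (g z - g (p x) - B/lam) + t*K
        = (t*((g z - g (p x))*(2*lam) - 2*B + t*Q)) / (2*lam) / t := by
      rw [hK]
      field_simp
    rw [goal2]
    exact div_nonneg (div_nonneg base h2l.le) ht.le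
  by_contra hcon
  push_neg at hcon
  set C := g z - g (p x) - B / lam with hC
  have hC0 : C < 0 := by rw [hC]; linarith
  set t := min 1 ((-C) / (2*(K+1))) with htdef
  have htpos : 0 < t := lt_min one_pos (div_pos (by linarith) (by linarith))
  have ht1 : t ≤ 1 := min_le_left _ _
  have h2 := key t htpos ht1
  have htK : t * K ≤ (-C) / 2 := by
    have h3 : t ≤ (-C) / (2*(K+1)) := min_le_right _ _
    have h4 : t * K ≤ ((-C) / (2*(K+1))) * K :=
      mul_le_mul_of_nonneg_right h3 hKnn
    have h5 : ((-C) / (2*(K+1))) * K ≤ (-C) / 2 := by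
      rw [div_mul_eq_mul_div, div_le_div_iff₀ (by linarith) (by norm_num)]
      nlinarith [hC0, hKnn]
    linarith
  clear_value t C K B Q
  linarith [h2, htK, hC0]

/-- Firm nonexpansiveness. -/
lemma prox_firm {D : Matrix (Fin n) (Fin n) ℝ} (hD : D.PosDef)
    {lam : ℝ} (hlam : 0 < lam)
    {g : EuclideanSpace ℝ (Fin n) → ℝ} (hg : ConvexOn ℝ Set.univ g)
    {p : EuclideanSpace ℝ (Fin n) → EuclideanSpace ℝ (Fin n)}
    (hp : ∀ x w, g (p x) + quadD D (p x - x) / (2*lam)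
            ≤ g w + quadD D (w - x) / (2*lam))
    (x y : EuclideanSpace ℝ (Fin n)) :
    quadD D (p x - p y) ≤ Bf D (x - y) (p x - p y) := by
  have h1 := prox_VI hD hlam hg hp x (p y)
  have h2 := prox_VI hD hlam hg hp y (p x)
  have hsumdiv := add_le_add h1 h2
  have hsum : Bf D (x - p x) (p y - p x) + Bf D (y - p y) (p x - p y) ≤ 0 := by
    have heq : Bf D (x - p x) (p y - p x) + Bf D (y - p y) (p x - p y)
        = (Bf D (x - p x) (p y - p x) / lam + Bf D (y - p y) (p x - p y) / lam) * lam := by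
      field_simp
    rw [heq]
    calc _ ≤ ((g (p y) - g (p x)) + (g (p x) - g (p y))) * lam :=
            mul_le_mul_of_nonneg_right hsumdiv hlam.le
      _ = 0 := by ring
  have h3 : Bf D (x - p x) (p y - p x) = - Bf D (x - p x) (p x - p y) := by
    have h : (p y - p x) = -(p x - p y) := by abel
    rw [h, Bf_neg_right hD.1]
  have h4 : Bf D ((p x - p y) - (x - y)) (p x - p y) ≤ 0 := by
    have h5 : (p x - p y) - (x - y) = (y - p y) - (x - p x) := by abel
    rw [h5, Bf_sub_left]
    rw [h3] at hsum
    linarith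
  rw [Bf_sub_left, ← quadD_eq] at h4
  linarith [h4, (Bf_symm hD.1 (x - y) (p x - p y)).symm]
  
lemma sandwich {D : Matrix (Fin n) (Fin n) ℝ} (hD : D.PosDef)
    {d a : EuclideanSpace ℝ (Fin n)} (hfirm : quadD D a ≤ Bf D d a) :
    0 ≤ Bf D d a ∧ Bf D d a ≤ quadD D d := by
  have hqa := quadD_nonneg hD a
  have hqd := quadD_nonneg hD d
  have hCS := Bf_sq_le hD d a
  constructor
  · linarith
  · by_contra h
    push_neg at h
    have hBpos : 0 < Bf D d a := lt_of_le_of_lt hqd h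
    nlinarith [mul_pos (sub_pos.2 h) hBpos, mul_le_mul_of_nonneg_left hfirm hqd]

end Aux

open Aux

theorem stmt_10 {n : ℕ} (m lam mu : ℝ) (hm : 1 ≤ m) (hlam : 0 < lam) (hmu : 0 < mu)
    (D₁ D₂ : Matrix (Fin n) (Fin n) ℝ) (hD₁ : D₁.PosDef) (hD₂ : D₂.PosDef)
    (heig₁ : ∀ i, hD₁.1.eigenvalues i ∈ Set.Icc (1/m) m)
    (heig₂ : ∀ i, hD₂.1.eigenvalues i ∈ Set.Icc (1/m) m)
    (g f : EuclideanSpace ℝ (Fin n) → ℝ)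
    (hg : ConvexOn ℝ Set.univ g) (hf : ConvexOn ℝ Set.univ f)
    (hglsc : LowerSemicontinuous g) (hflsc : LowerSemicontinuous f)
    (pg pf : EuclideanSpace ℝ (Fin n) → EuclideanSpace ℝ (Fin n))
    (hpg : ∀ x w, g (pg x) + quadD D₁ (pg x - x) / (2*lam)
            ≤ g w + quadD D₁ (w - x) / (2*lam))
    (hpf : ∀ x w, f (pf x) + quadD D₂ (pf x - x) / (2*mu)
            ≤ f w + quadD D₂ (w - x) / (2*mu))
    (G : EuclideanSpace ℝ (Fin n) → EuclideanSpace ℝ (Fin n))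
    (hG : ∀ x, G x = (1/lam) • mulVecE D₁ (x - pg x) - (1/mu) • mulVecE D₂ (x - pf x)) :
    ∀ x y, ((-(m^4)*mu + mu - lam*m^2)/(lam*mu*m)) * ‖x - y‖^2
        ≤ inner ℝ (G x - G y) (x - y) ∧
      (inner ℝ (G x - G y) (x - y) : ℝ)
        ≤ ((lam*m^4 + mu*m^2 - lam)/(lam*mu*m)) * ‖x - y‖^2 := by
  intro x y
  have hm0 : (0:ℝ) < m := lt_of_lt_of_le one_pos hm
  have hm1 : (1:ℝ) ≤ m^2 := by nlinarith
  have hm2 : m^2 ≤ m^4 := by nlinarith [hm1, sq_nonneg m]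
  set d : EuclideanSpace ℝ (Fin n) := x - y with hd
  set a : EuclideanSpace ℝ (Fin n) := pg x - pg y with ha
  set b : EuclideanSpace ℝ (Fin n) := pf x - pf y with hb
  set s : ℝ := ‖d‖^2 with hs'
  have hs : 0 ≤ s := sq_nonneg _
  -- value of the inner product
  have hGxy : G x - G y = (1/lam) • mulVecE D₁ (d - a) - (1/mu) • mulVecE D₂ (d - b) := by
    have e1 : d - a = (x - pg x) - (y - pg y) := by rw [hd, ha]; abel
    have e2 : d - b = (x - pf x) - (y - pf y) := by rw [hd, hb]; abel
    rw [hG x, hG y, e1, e2, mulVecE_sub D₁ (x - pg x) (y - pg y),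
      mulVecE_sub D₂ (x - pf x) (y - pf y), smul_sub, smul_sub]
    abel
  have hval : (inner ℝ (G x - G y) d : ℝ)
      = (1/lam) * (Bf D₁ d d - Bf D₁ a d) - (1/mu) * (Bf D₂ d d - Bf D₂ b d) := by
    rw [hGxy, inner_sub_left, real_inner_smul_left, real_inner_smul_left]
    have e3 : (inner ℝ (mulVecE D₁ (d - a)) d : ℝ) = Bf D₁ (d - a) d := rfl
    have e4 : (inner ℝ (mulVecE D₂ (d - b)) d : ℝ) = Bf D₂ (d - b) d := rfl
    rw [e3, e4, Bf_sub_left D₁ d a d, Bf_sub_left D₂ d b d]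
  -- spectral bounds
  have hq1u : quadD D₁ d ≤ m * s := quadD_le hD₁.1 heig₁ d
  have hq2u : quadD D₂ d ≤ m * s := quadD_le hD₂.1 heig₂ d
  have hq1l : s ≤ m * quadD D₁ d := by
    have h := mul_le_mul_of_nonneg_left (le_quadD hD₁.1 heig₁ d) hm0.le
    have e : m * ((1/m) * s) = s := by field_simp
    rw [e] at h; exact h
  have hq2l : s ≤ m * quadD D₂ d := by
    have h := mul_le_mul_of_nonneg_left (le_quadD hD₂.1 heig₂ d) hm0.le
    have e : m * ((1/m) * s) = s := by field_simp
    rw [e] at h; exact h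
  -- firm nonexpansiveness + sandwich
  have hfirm1 : quadD D₁ a ≤ Bf D₁ d a := prox_firm hD₁ hlam hg hpg x y
  have hfirm2 : quadD D₂ b ≤ Bf D₂ d b := prox_firm hD₂ hmu hf hpf x y
  have hA1 : 0 ≤ Bf D₁ d a ∧ Bf D₁ d a ≤ quadD D₁ d := sandwich hD₁ hfirm1
  have hA2 : 0 ≤ Bf D₂ d b ∧ Bf D₂ d b ≤ quadD D₂ d := sandwich hD₂ hfirm2
  rw [hval, Bf_symm hD₁.1 a d, Bf_symm hD₂.1 b d, ← quadD_eq, ← quadD_eq]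
  set q1 : ℝ := quadD D₁ d
  set q2 : ℝ := quadD D₂ d
  set A1 : ℝ := Bf D₁ d a
  set A2 : ℝ := Bf D₂ d b
  have hden : (0:ℝ) < lam * mu * m := by positivity
  constructor
  · rw [div_mul_eq_mul_div (-(m^4)*mu + mu - lam*m^2) (lam*mu*m) s, div_le_iff₀ hden]
    have heq : ((1/lam) * (q1 - A1) - (1/mu) * (q2 - A2)) * (lam * mu * m)
        = mu*m*q1 - mu*m*A1 - lam*m*q2 + lam*m*A2 := by
      field_simp; ring
    rw [heq]
    have l1 : mu*s ≤ mu*(m*q1) := mul_le_mul_of_nonneg_left hq1l hmu.le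
    have l2 : mu*m*A1 ≤ mu*m*(m*s) :=
      mul_le_mul_of_nonneg_left (hA1.2.trans hq1u) (by positivity : (0:ℝ) ≤ mu*m)
    have l3 : lam*m*q2 ≤ lam*m*(m*s) :=
      mul_le_mul_of_nonneg_left hq2u (by positivity : (0:ℝ) ≤ lam*m)
    have l4 : 0 ≤ lam*m*A2 := mul_nonneg (by positivity : (0:ℝ) ≤ lam*m) hA2.1
    have l5 : mu*(m^2*s) ≤ mu*(m^4*s) :=
      mul_le_mul_of_nonneg_left (mul_le_mul_of_nonneg_right hm2 hs) hmu.le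
    linarith [l1, l2, l3, l4, l5]
  · rw [div_mul_eq_mul_div (lam*m^4 + mu*m^2 - lam) (lam*mu*m) s, le_div_iff₀ hden]
    have heq : ((1/lam) * (q1 - A1) - (1/mu) * (q2 - A2)) * (lam * mu * m)
        = mu*m*q1 - mu*m*A1 - lam*m*q2 + lam*m*A2 := by
      field_simp; ring
    rw [heq]
    have r1 : mu*m*q1 ≤ mu*m*(m*s) :=
      mul_le_mul_of_nonneg_left hq1u (by positivity : (0:ℝ) ≤ mu*m)
    have r2 : 0 ≤ mu*m*A1 := mul_nonneg (by positivity : (0:ℝ) ≤ mu*m) hA1.1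
    have r3 : lam*s ≤ lam*(m*q2) := mul_le_mul_of_nonneg_left hq2l hlam.le
    have r4 : lam*m*A2 ≤ lam*m*(m*s) :=
      mul_le_mul_of_nonneg_left (hA2.2.trans hq2u) (by positivity : (0:ℝ) ≤ lam*m)
    have r5 : lam*(m^2*s) ≤ lam*(m^4*s) :=
      mul_le_mul_of_nonneg_left (mul_le_mul_of_nonneg_right hm2 hs) hlam.le
    linarith [r1, r2, r3, r4, r5]
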